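/- Let Z be a set of functions ℕ → ℕ with |Z| < min(𝔡, 𝔯), and let d : ℕ → ℕ be strictly increasing. Then there exist infinite co-infinite subsets x, y of ℕ such that for every z ∈ Z, z(n) < x(n) for infinitely many n and z(n) < y(n) for infinitely many n (comparing increasing enumerations), and d(k) ≤ max(x^c(k), y^c(k)) for all but finitely many k. -/

import Mathlib

/-- The 1-indexed increasing enumeration of a subset of ℕ:
`enum x n` is the `n`-th smallest element of `x`. -/
noncomputable def enum (x : Set ℕ) (n : ℕ) : ℕ := Nat.nth (· ∈ x) (n - 1)

/-- A set of functions is dominating if every function is eventually dominated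
by a member of it. -/
def IsDominating (D : Set (ℕ → ℕ)) : Prop :=
  ∀ f : ℕ → ℕ, ∃ d ∈ D, ∀ᶠ n in Filter.atTop, f n ≤ d n

/-- The dominating number 𝔡. -/
noncomputable def domNumber : Cardinal :=
  sInf {c : Cardinal | ∃ D : Set (ℕ → ℕ), IsDominating D ∧ Cardinal.mk D = c}

/-- `r` reaps the family `A` of infinite sets: it splits each member into two
infinite pieces. -/
def Reaps (r : Set ℕ) (A : Set (Set ℕ)) : Prop :=
  ∀ a ∈ A, (a ∩ r).Infinite ∧ (a \ r).Infinite

/-- The reaping number 𝔯. -/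
noncomputable def reapNumber : Cardinal :=
  sInf {c : Cardinal | ∃ A : Set (Set ℕ), (∀ a ∈ A, a.Infinite) ∧
    (¬ ∃ r : Set ℕ, r.Infinite ∧ Reaps r A) ∧ Cardinal.mk A = c}

open Filter Set

private lemma strictMono_id_le' {f : ℕ → ℕ} (hf : ∀ i, f i < f (i + 1)) : ∀ n, n ≤ f n := by
  intro n
  induction n with
  | zero => exact Nat.zero_le _
  | succ k ih => exact Nat.succ_le_of_lt (lt_of_le_of_lt ih (hf k))

private lemma infinite_of_unbounded {s : Set ℕ} (h : ∀ B, ∃ n, n ∈ s ∧ B < n) : s.Infinite := by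
  by_contra h'
  rw [Set.not_infinite] at h'
  obtain ⟨B, hB⟩ := h'.bddAbove
  obtain ⟨n, hn, hBn⟩ := h B
  exact absurd (hB hn) (by omega)

private lemma exists_interval' {w : ℕ → ℕ} (hw : ∀ i, w i < w (i + 1)) :
    ∀ {X : ℕ}, w 0 ≤ X → ∃ j, w j ≤ X ∧ X < w (j + 1) := by
  intro X
  induction X with
  | zero => exact fun h0 => ⟨0, h0, by have := hw 0; omega⟩
  | succ X ih =>
    intro h0
    by_cases hX : w 0 ≤ X
    · obtain ⟨j, hj1, hj2⟩ := ih hX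
      by_cases h2 : X + 1 < w (j + 1)
      · exact ⟨j, by omega, h2⟩
      · exact ⟨j + 1, by omega, by have := hw (j + 1); omega⟩
    · exact ⟨0, h0, by have := hw 0; omega⟩

private lemma block_unique' {w : ℕ → ℕ} (hw : ∀ i, w i < w (i + 1)) {j m m' : ℕ}
    (h1 : w m < j) (h2 : j ≤ w (m + 1)) (h3 : w m' < j) (h4 : j ≤ w (m' + 1)) : m = m' := by
  have hmono := (strictMono_nat_of_lt_succ hw).monotone
  rcases lt_trichotomy m m' with h | h | h
  · have : w (m + 1) ≤ w m' := hmono h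
    omega
  · exact h
  · have : w (m' + 1) ≤ w m := hmono h
    omega

private lemma count_le_of_forall_lt {p : ℕ → Prop} {inst : DecidablePred p} {M B : ℕ}
    (h : ∀ w, w < M → p w → w < B) : @Nat.count p inst M ≤ B := by
  haveI := inst
  rw [Nat.count_eq_card_filter_range]
  refine le_trans (Finset.card_le_card ?_) (le_of_eq (Finset.card_range B))
  intro w hw
  simp only [Finset.mem_filter, Finset.mem_range] at hw ⊢
  exact h w hw.1 hw.2

private lemma exists_escape {F : Set (ℕ → ℕ)} (h : Cardinal.mk F < domNumber) :
    ∃ g : ℕ → ℕ, StrictMono g ∧ (∀ a, a < g a) ∧ ∀ f ∈ F, ∀ A, ∃ a, A ≤ a ∧ f a < g a := by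
  have hnd : ¬IsDominating F := by
    intro hD
    have hmem : Cardinal.mk ↥F ∈ {c : Cardinal | ∃ D : Set (ℕ → ℕ), IsDominating D ∧ Cardinal.mk D = c} :=
      ⟨F, hD, rfl⟩
    exact absurd (csInf_le' hmem) (not_le_of_gt h)
  rw [IsDominating] at hnd
  push_neg at hnd
  obtain ⟨g₀, hg₀⟩ := hnd
  refine ⟨fun a => (Finset.range (a + 1)).sup g₀ + a + 1, ?_, fun a => by show a < (Finset.range (a + 1)).sup g₀ + a + 1; omega, ?_⟩
  · apply strictMono_nat_of_lt_succ
    intro a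
    have : (Finset.range (a + 1)).sup g₀ ≤ (Finset.range (a + 1 + 1)).sup g₀ :=
      Finset.sup_mono (Finset.range_subset_range.mpr (by omega))
    omega
  · intro f hf A
    have h1 := hg₀ f hf
    obtain ⟨a, ha1, ha2⟩ := Filter.frequently_atTop.mp h1 A
    have h2 : g₀ a ≤ (Finset.range (a + 1)).sup g₀ := Finset.le_sup (Finset.mem_range.mpr (by omega))
    exact ⟨a, ha1, by show f a < (Finset.range (a + 1)).sup g₀ + a + 1; omega⟩

private lemma exists_reaper {A : Set (Set ℕ)} (hA : ∀ a ∈ A, a.Infinite)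
    (h : Cardinal.mk A < reapNumber) : ∃ r : Set ℕ, r.Infinite ∧ Reaps r A := by
  by_contra hc
  have hmem : Cardinal.mk ↥A ∈ {c : Cardinal | ∃ A' : Set (Set ℕ), (∀ a ∈ A', a.Infinite) ∧
      (¬ ∃ r : Set ℕ, r.Infinite ∧ Reaps r A') ∧ Cardinal.mk A' = c} := ⟨A, hA, hc, rfl⟩
  exact absurd (csInf_le' hmem) (not_le_of_gt h)

theorem stmt10 (Z : Set (ℕ → ℕ)) (hZ : Cardinal.mk Z < min domNumber reapNumber)
    (d : ℕ → ℕ) (hd : StrictMono d) :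
    ∃ x y : Set ℕ, x.Infinite ∧ xᶜ.Infinite ∧ y.Infinite ∧ yᶜ.Infinite ∧
      (∀ z ∈ Z, {n : ℕ | z n < enum x n}.Infinite ∧ {n : ℕ | z n < enum y n}.Infinite) ∧
      ∀ᶠ k in Filter.atTop, d k ≤ max (enum xᶜ k) (enum yᶜ k) := by
  classical
  rw [lt_min_iff] at hZ
  obtain ⟨hZd, hZr⟩ := hZ
  have hdid : ∀ n, n ≤ d n := strictMono_id_le' (fun i => hd (Nat.lt_succ_self i))
  -- the eventual-minimum function
  set zm : (ℕ → ℕ) → ℕ → ℕ := fun z a => sInf (z '' Set.Ici a) with hzmdef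
  have zm_attain : ∀ z a, ∃ n, a ≤ n ∧ z n = zm z a := by
    intro z a
    have hne : (z '' Set.Ici a).Nonempty := ⟨z a, a, Set.mem_Ici.mpr le_rfl, rfl⟩
    obtain ⟨n, hn, he⟩ := Nat.sInf_mem hne
    exact ⟨n, hn, he⟩
  have zm_mono : ∀ z a a', a ≤ a' → zm z a ≤ zm z a' := by
    intro z a a' haa
    obtain ⟨n, hn, he⟩ := zm_attain z a'
    rw [← he]
    exact Nat.sInf_le ⟨n, Set.mem_Ici.mpr (haa.trans hn), rfl⟩
  -- first escape function G
  obtain ⟨G, hGsm, hGgt, hGesc⟩ :=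
    exists_escape (F := (fun z => fun a => zm z a) '' Z) (lt_of_le_of_lt Cardinal.mk_image_le hZd)
  have hGesc' : ∀ z ∈ Z, ∀ A, ∃ a, A ≤ a ∧ zm z a < G a := by
    intro z hz A
    exact hGesc _ (Set.mem_image_of_mem _ hz) A
  -- scales
  obtain ⟨al, hal0, halS⟩ :
      ∃ al : ℕ → ℕ, al 0 = 0 ∧
        ∀ j, al (j + 1) = G (d (al j + 1) + 1 + 1) + (d (al j + 1) + 1) + 2 :=
    ⟨fun j => Nat.rec 0 (fun _ a => G (d (a + 1) + 1 + 1) + (d (a + 1) + 1) + 2) j, rfl,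
      fun _ => rfl⟩
  set ga : ℕ → ℕ := fun j => d (al j + 1) + 1 with hgadef
  have hga_eq : ∀ j, ga j = d (al j + 1) + 1 := fun _ => rfl
  have halS' : ∀ j, al (j + 1) = G (ga j + 1) + ga j + 2 := by
    intro j
    rw [halS j, hga_eq j]
  have hga_al : ∀ j, al j + 2 ≤ ga j := by
    intro j
    have := hdid (al j + 1)
    rw [hga_eq]
    omega
  have hal_ga : ∀ j, ga j + 2 ≤ al (j + 1) := by
    intro j
    rw [halS']
    omega
  have hal_succ : ∀ j, al j < al (j + 1) := by
    intro j
    have h1 := hga_al j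
    have h2 := hal_ga j
    omega
  have hga_succ : ∀ j, ga j < ga (j + 1) := by
    intro j
    have h1 := hal_ga j
    have h2 := hga_al (j + 1)
    omega
  have hga_sm : StrictMono ga := strictMono_nat_of_lt_succ hga_succ
  have hal_mono : Monotone al := (strictMono_nat_of_lt_succ hal_succ).monotone
  have hga_id : ∀ j, j ≤ ga j := strictMono_id_le' hga_succ
  -- witness index sets b z
  set b : (ℕ → ℕ) → Set ℕ := fun z => {j | zm z (ga j + 1) < al (j + 2)} with hbdef
  have hb : ∀ z ∈ Z, ∀ J, ∃ j, J ≤ j ∧ j ∈ b z := by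
    intro z hz J
    obtain ⟨a, ha1, ha2⟩ := hGesc' z hz (ga (J + 1) + 1)
    have ha0 : ga 0 ≤ a - 1 := by
      have hm : ga 0 ≤ ga (J + 1) := hga_sm.monotone (Nat.zero_le _)
      omega
    obtain ⟨j, hj1, hj2⟩ := exists_interval' hga_succ ha0
    have hga1a : ga j + 1 ≤ a := by omega
    have haga : a ≤ ga (j + 1) := by omega
    have hJj : J ≤ j := by
      have h3 : ga (J + 1) < ga (j + 1) := by omega
      have := hga_sm.lt_iff_lt.mp h3
      omega
    refine ⟨j, hJj, ?_⟩
    show zm z (ga j + 1) < al (j + 2)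
    have c1 : zm z (ga j + 1) ≤ zm z a := zm_mono z _ _ hga1a
    have c2 : G a ≤ G (ga (j + 1)) := hGsm.monotone haga
    have c3 : G (ga (j + 1)) < G (ga (j + 1) + 1) := hGsm (Nat.lt_succ_self _)
    have c4 : G (ga (j + 1) + 1) ≤ al (j + 2) := by
      rw [halS' (j + 1)]
      omega
    omega
  -- double-hitting escape
  set nxt : (ℕ → ℕ) → ℕ → ℕ := fun z k => sInf {j | j ∈ b z ∧ k < j} with hnxtdef
  have hnxt : ∀ z ∈ Z, ∀ k, nxt z k ∈ b z ∧ k < nxt z k := by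
    intro z hz k
    have hne : {j | j ∈ b z ∧ k < j}.Nonempty := by
      obtain ⟨j, hj1, hj2⟩ := hb z hz (k + 1)
      exact ⟨j, hj2, by omega⟩
    exact Nat.sInf_mem hne
  obtain ⟨H, hHsm, hHgt, hHesc⟩ :=
    exists_escape (F := (fun z => fun k => nxt z (nxt z k)) '' Z)
      (lt_of_le_of_lt Cardinal.mk_image_le hZd)
  have hHesc' : ∀ z ∈ Z, ∀ A, ∃ k, A ≤ k ∧ nxt z (nxt z k) < H k := by
    intro z hz A
    exact hHesc _ (Set.mem_image_of_mem _ hz) A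
  -- the v-orbit
  obtain ⟨v, hv0, hvS⟩ : ∃ v : ℕ → ℕ, v 0 = 0 ∧ ∀ m, v (m + 1) = H (v m) :=
    ⟨fun m => H^[m] 0, rfl, fun m => Function.iterate_succ_apply' H m 0⟩
  have hv_succ : ∀ m, v m < v (m + 1) := by
    intro m
    rw [hvS]
    exact hHgt (v m)
  have hv_id : ∀ m, m ≤ v m := strictMono_id_le' hv_succ
  -- the pair-block sets c z
  set c : (ℕ → ℕ) → Set ℕ := fun z => {m | ∃ j, j ∈ b z ∧ v m < j ∧ j + 1 ≤ v (m + 1)}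
    with hcdef
  have hc : ∀ z ∈ Z, ∀ M, ∃ m, M ≤ m ∧ m ∈ c z := by
    intro z hz M
    obtain ⟨k, hk1, hk2⟩ := hHesc' z hz (v M)
    obtain ⟨m, hm1, hm2⟩ := exists_interval' hv_succ (X := k) (by rw [hv0]; omega)
    have hMm : M ≤ m := by
      have h1 : v M < v (m + 1) := by omega
      have h2 := (strictMono_nat_of_lt_succ hv_succ).lt_iff_lt.mp h1
      omega
    obtain ⟨hj1b, hj1gt⟩ := hnxt z hz k
    obtain ⟨hj2b, hj2gt⟩ := hnxt z hz (nxt z k)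
    by_cases hcase : nxt z k + 1 ≤ v (m + 1)
    · exact ⟨m, hMm, nxt z k, hj1b, by omega, hcase⟩
    · refine ⟨m + 1, by omega, nxt z (nxt z k), hj2b, by omega, ?_⟩
      have h3 : H k < H (v (m + 1)) := hHsm hm2
      rw [← hvS] at h3
      omega
  have hcinf : ∀ z ∈ Z, (c z).Infinite := by
    intro z hz
    apply infinite_of_unbounded
    intro B
    obtain ⟨m, hm1, hm2⟩ := hc z hz (B + 1)
    exact ⟨m, hm2, by omega⟩
  -- the reaper
  obtain ⟨ρ, hρI, hρcI, hρz⟩ :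
      ∃ ρ : Set ℕ, ρ.Infinite ∧ ρᶜ.Infinite ∧
        ∀ z ∈ Z, (c z ∩ ρ).Infinite ∧ (c z \ ρ).Infinite := by
    rcases Set.eq_empty_or_nonempty Z with hZe | ⟨z₀, hz₀⟩
    · refine ⟨{m | ∃ t, m = 2 * t}, ?_, ?_, by simp [hZe]⟩
      · apply infinite_of_unbounded
        intro B
        exact ⟨2 * B + 2, ⟨B + 1, by omega⟩, by omega⟩
      · apply infinite_of_unbounded
        intro B
        refine ⟨2 * B + 1, ?_, by omega⟩
        rintro ⟨t, ht⟩
        omega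
    · have hAinf : ∀ a ∈ (fun z => c z) '' Z, a.Infinite := by
        rintro a ⟨z, hz, rfl⟩
        exact hcinf z hz
      obtain ⟨ρ, hρ, hre⟩ := exists_reaper hAinf (lt_of_le_of_lt Cardinal.mk_image_le hZr)
      have h0 := hre _ (Set.mem_image_of_mem _ hz₀)
      refine ⟨ρ, hρ, h0.2.mono (fun w hw => hw.2), ?_⟩
      intro z hz
      exact hre _ (Set.mem_image_of_mem _ hz)
  -- the block-union set σ and the void-region operator Up
  set σ : Set ℕ := {j | ∃ m, m ∈ ρ ∧ v m < j ∧ j ≤ v (m + 1)} with hσdef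
  have hσ_in : ∀ {m j : ℕ}, m ∈ ρ → v m < j → j ≤ v (m + 1) → j ∈ σ :=
    fun hm h1 h2 => ⟨_, hm, h1, h2⟩
  have hσ_out : ∀ {m j : ℕ}, m ∉ ρ → v m < j → j ≤ v (m + 1) → j ∉ σ := by
    rintro m j hm h1 h2 ⟨m', hm', h1', h2'⟩
    exact hm (block_unique' hv_succ h1 h2 h1' h2' ▸ hm')
  set Up : Set ℕ → Set ℕ := fun T =>
    {w | ∃ j, j ∈ T ∧ ga j ≤ w ∧ (w < al (j + 1) ∨ (j + 1 ∈ T ∧ w < ga (j + 1)))} with hUpdef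
  have hcover : ∀ (T : Set ℕ) (j w : ℕ), j ∈ T → j + 1 ∈ T → ga j ≤ w → w < al (j + 2) →
      w ∈ Up T := by
    intro T j w hj hj1 hw1 hw2
    by_cases hA : w < al (j + 1)
    · exact ⟨j, hj, hw1, Or.inl hA⟩
    · by_cases hB : w < ga (j + 1)
      · exact ⟨j, hj, hw1, Or.inr ⟨hj1, hB⟩⟩
      · exact ⟨j + 1, hj1, by omega, Or.inl hw2⟩
  have hganotin : ∀ (T : Set ℕ) (j : ℕ), j ∉ T → ga j ∉ Up T := by
    rintro T j hj ⟨j', hj', hle, hub⟩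
    have hlt : ga j < ga (j' + 1) := by
      rcases hub with h | h
      · exact lt_of_lt_of_le h (by have := hal_ga (j' + 1); have := hga_al (j' + 1); omega)
      · exact h.2
    have e1 : j < j' + 1 := hga_sm.lt_iff_lt.mp hlt
    have e2 : j' ≤ j := hga_sm.le_iff_le.mp hle
    have : j = j' := by omega
    exact hj (this ▸ hj')
  have hga_inj : Function.Injective ga := hga_sm.injective
  have hUpMem : ∀ (T : Set ℕ) (j : ℕ), j ∈ T → ga j ∈ Up T := by
    intro T j hj
    exact ⟨j, hj, le_rfl, Or.inl (by have := hal_ga j; omega)⟩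
  have hUpInf : ∀ T : Set ℕ, T.Infinite → (Up T).Infinite := by
    intro T hT
    exact ((hT.image (hga_inj.injOn)).mono (by rintro w ⟨j, hj, rfl⟩; exact hUpMem T j hj))
  have hUpcInf : ∀ T : Set ℕ, Tᶜ.Infinite → (Up T)ᶜ.Infinite := by
    intro T hT
    exact ((hT.image (hga_inj.injOn)).mono (by rintro w ⟨j, hj, rfl⟩; exact hganotin T j hj))
  have hσI : σ.Infinite := by
    have hinj : Set.InjOn (fun m => v (m + 1)) ρ := fun a _ b _ h => by
      have := (strictMono_nat_of_lt_succ hv_succ).injective h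
      omega
    refine (hρI.image hinj).mono ?_
    rintro w ⟨m, hm, rfl⟩
    exact hσ_in hm (hv_succ m) le_rfl
  have hσcI : σᶜ.Infinite := by
    have hinj : Set.InjOn (fun m => v (m + 1)) ρᶜ := fun a _ b _ h => by
      have := (strictMono_nat_of_lt_succ hv_succ).injective h
      omega
    refine (hρcI.image hinj).mono ?_
    rintro w ⟨m, hm, rfl⟩
    exact hσ_out hm (hv_succ m) le_rfl
  -- counting bound outside the active side
  have hcount : ∀ (T : Set ℕ) (j M : ℕ), j ∉ T → M ≤ ga (j + 1) →
      @Nat.count (· ∈ Up T) (Classical.decPred _) M ≤ al j := by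
    intro T j M hj hM
    apply count_le_of_forall_lt
    rintro w hw ⟨j', hj'T, hga', hub⟩
    have hwlt : w < ga (j + 1) := by omega
    have e1 : j' < j + 1 := hga_sm.lt_iff_lt.mp (lt_of_le_of_lt hga' hwlt)
    have e2 : j' ≠ j := fun h => hj (h ▸ hj'T)
    have e3 : j' + 1 ≤ j := by omega
    rcases hub with h | ⟨hT1, hlt⟩
    · exact lt_of_lt_of_le h (hal_mono e3)
    · have e4 : j' + 1 ≠ j := fun h => hj (h ▸ hT1)
      have e5 : j' + 2 ≤ j := by omega
      have e6 : ga (j' + 1) + 2 ≤ al (j' + 2) := hal_ga (j' + 1)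
      exact lt_of_lt_of_le (by omega : w < al (j' + 2)) (hal_mono e5)
  -- nth facts
  have hnth_ge : ∀ s : Set ℕ, s.Infinite → ∀ i : ℕ, i ≤ Nat.nth (· ∈ s) i := by
    intro s hs i
    exact Nat.le_nth (fun hf => absurd hf hs)
  have hle_nth : ∀ s : Set ℕ, s.Infinite → ∀ {M k : ℕ},
      @Nat.count (· ∈ s) (Classical.decPred _) M ≤ k → M ≤ Nat.nth (· ∈ s) k := by
    intro s hs M k h
    exact (Nat.count_le_iff_le_nth (p := (· ∈ s)) hs).mp h
  -- slow functions are beaten everywhere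
  have hslow : ∀ s : Set ℕ, s.Infinite → ∀ z : ℕ → ℕ, {n | z n + 2 ≤ n}.Infinite →
      {n | z n < enum s n}.Infinite := by
    intro s hs z hzs
    refine hzs.mono ?_
    intro n hn
    simp only [Set.mem_setOf_eq] at hn ⊢
    have h1 : n - 1 ≤ Nat.nth (· ∈ s) (n - 1) := hnth_ge s hs (n - 1)
    show z n < Nat.nth (· ∈ s) (n - 1)
    omega
  -- dichotomy
  have hdi : ∀ z : ℕ → ℕ, {n | z n + 2 ≤ n}.Infinite ∨ ∃ N, ∀ n, N ≤ n → n ≤ z n + 1 := by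
    intro z
    by_cases h : {n | z n + 2 ≤ n}.Infinite
    · exact Or.inl h
    · right
      rw [Set.not_infinite] at h
      obtain ⟨B, hB⟩ := h.bddAbove
      refine ⟨B + 1, fun n hn => ?_⟩
      by_contra hcon
      have hmem : n ∈ {n | z n + 2 ≤ n} := by
        simp only [Set.mem_setOf_eq]
        omega
      have := hB hmem
      omega
  -- core: fast functions are beaten on the T-side
  have hcore : ∀ T : Set ℕ, (Up T)ᶜ.Infinite → ∀ z : ℕ → ℕ, ∀ N : ℕ,
      (∀ n, N ≤ n → n ≤ z n + 1) →
      (∀ M, ∃ j, M ≤ j ∧ j ∈ T ∧ j + 1 ∈ T ∧ j ∈ b z) →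
      {n | z n < enum ((Up T)ᶜ) n}.Infinite := by
    intro T hTc z N hN hsup
    apply infinite_of_unbounded
    intro B
    obtain ⟨j, hj1, hjT, hjT1, hjb⟩ := hsup (B + N + 1)
    obtain ⟨n, hn1, hn2⟩ := zm_attain z (ga j + 1)
    have hjbz : zm z (ga j + 1) < al (j + 2) := hjb
    have hgaj := hga_id j
    have hNn : N ≤ n := by omega
    have hz1 : n ≤ z n + 1 := hN n hNn
    have hcnt : @Nat.count (· ∈ (Up T)ᶜ) (Classical.decPred _) (z n + 1) ≤ ga j := by
      apply count_le_of_forall_lt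
      intro w hw hwc
      by_contra hge
      push_neg at hge
      exact hwc (hcover T j w hjT hjT1 hge (by omega))
    have hcnt2 : @Nat.count (· ∈ (Up T)ᶜ) (Classical.decPred _) (z n + 1) ≤ n - 1 := by omega
    have hle : z n + 1 ≤ Nat.nth (· ∈ (Up T)ᶜ) (n - 1) := hle_nth _ hTc hcnt2
    refine ⟨n, ?_, by omega⟩
    show z n < Nat.nth (· ∈ (Up T)ᶜ) (n - 1)
    omega
  -- supplies
  have hsupx : ∀ z ∈ Z, ∀ M, ∃ j, M ≤ j ∧ j ∈ σ ∧ j + 1 ∈ σ ∧ j ∈ b z := by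
    intro z hz M
    obtain ⟨m, hm, hgt⟩ := ((hρz z hz).1).exists_gt M
    obtain ⟨j, hjb, hj1, hj2⟩ := hm.1
    have hvm : m ≤ v m := hv_id m
    exact ⟨j, by omega, hσ_in hm.2 hj1 (by omega), hσ_in hm.2 (by omega) hj2, hjb⟩
  have hsupy : ∀ z ∈ Z, ∀ M, ∃ j, M ≤ j ∧ j ∈ σᶜ ∧ j + 1 ∈ σᶜ ∧ j ∈ b z := by
    intro z hz M
    obtain ⟨m, hm, hgt⟩ := ((hρz z hz).2).exists_gt M
    obtain ⟨j, hjb, hj1, hj2⟩ := hm.1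
    have hvm : m ≤ v m := hv_id m
    exact ⟨j, by omega, hσ_out hm.2 hj1 (by omega), hσ_out hm.2 (by omega) hj2, hjb⟩
  -- assemble
  have hxc : (Up σ)ᶜ.Infinite := hUpcInf σ hσcI
  have hyc : (Up σᶜ)ᶜ.Infinite := hUpcInf σᶜ (by rwa [compl_compl])
  have hUσ_inf : (Up σ).Infinite := hUpInf σ hσI
  have hUσc_inf : (Up σᶜ).Infinite := hUpInf σᶜ hσcI
  refine ⟨(Up σ)ᶜ, (Up σᶜ)ᶜ, hxc, by rwa [compl_compl], hyc, by rwa [compl_compl], ?_, ?_⟩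
  · intro z hz
    rcases hdi z with hs | ⟨N, hN⟩
    · exact ⟨hslow _ hxc z hs, hslow _ hyc z hs⟩
    · exact ⟨hcore σ hxc z N hN (hsupx z hz), hcore σᶜ hyc z N hN (hsupy z hz)⟩
  · rw [Filter.eventually_atTop]
    refine ⟨ga 0 + 1, fun k hk => ?_⟩
    have hdk0 : ga 0 ≤ d k := le_trans (by omega) (hdid k)
    obtain ⟨j, hj1, hj2⟩ := exists_interval' hga_succ hdk0
    have hkj : al j + 1 < k := by
      have h5 : d (al j + 1) < d k := by
        have h6 := hga_eq j
        omega
      have := hd.lt_iff_lt.mp h5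
      omega
    simp only [compl_compl]
    by_cases hjs : j ∈ σ
    · have h6 : @Nat.count (· ∈ Up σᶜ) (Classical.decPred _) (d k) ≤ al j :=
        hcount σᶜ j (d k) (fun h => h hjs) (le_of_lt hj2)
      have h7 : d k ≤ Nat.nth (· ∈ Up σᶜ) (k - 1) := hle_nth _ hUσc_inf (by omega)
      exact le_max_of_le_right h7
    · have h6 : @Nat.count (· ∈ Up σ) (Classical.decPred _) (d k) ≤ al j :=
        hcount σ j (d k) hjs (le_of_lt hj2)
      have h7 : d k ≤ Nat.nth (· ∈ Up σ) (k - 1) := hle_nth _ hUσ_inf (by omega)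
      exact le_max_of_le_left h7
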